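/- Let (X,‖·‖) be a real normed space, n ≥ 2, x = (x_1,…,x_n) ∈ X^n and x* = (x*_1,…,x*_n) ∈ (X*)^n. Then the equality Σ_{i=1}^n ⟨x*_i, x_i⟩ = (max_{1≤i≤n} ‖x*_i‖*) · (Σ_{i=1}^n ‖x_i‖) holds if and only if both of the following are satisfied: (i) ⟨x*_i, x_i⟩ = ‖x*_i‖*·‖x_i‖ for all i = 1,…,n, and (ii) (‖x*_i‖* − max_{1≤j≤n} ‖x*_j‖*)·‖x_i‖ = 0 for all i = 1,…,n. -/
import Mathlib

open Finset

theorem stmt_3 {X : Type*} [NormedAddCommGroup X] [NormedSpace ℝ X]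
    (n : ℕ) (hn : 2 ≤ n) (x : Fin n → X) (xs : Fin n → (X →L[ℝ] ℝ)) :
    (∑ i, xs i (x i) = (⨆ i, ‖xs i‖) * ∑ i, ‖x i‖) ↔
      ((∀ i, xs i (x i) = ‖xs i‖ * ‖x i‖) ∧
        (∀ i, (‖xs i‖ - ⨆ j, ‖xs j‖) * ‖x i‖ = 0)) := by
  have hne : Nonempty (Fin n) := ⟨⟨0, by omega⟩⟩
  set M := ⨆ i, ‖xs i‖ with hMdef
  have hbd : ∀ i, ‖xs i‖ ≤ M := fun i =>
    le_ciSup (f := fun j => ‖xs j‖) (Set.Finite.bddAbove (Set.finite_range _)) i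
  have hterm : ∀ i, xs i (x i) ≤ ‖xs i‖ * ‖x i‖ := fun i =>
    le_trans (le_abs_self _) ((xs i).le_opNorm (x i))
  have hterm2 : ∀ i, ‖xs i‖ * ‖x i‖ ≤ M * ‖x i‖ := fun i =>
    mul_le_mul_of_nonneg_right (hbd i) (norm_nonneg _)
  constructor
  · intro h
    have key : ∀ i ∈ Finset.univ, M * ‖x i‖ - xs i (x i) = 0 := by
      apply (Finset.sum_eq_zero_iff_of_nonneg ?_).mp
      · rw [Finset.sum_sub_distrib, ← Finset.mul_sum, h, sub_self]
      · intro i _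
        have := hterm i; have := hterm2 i
        linarith
    have key' : ∀ i, xs i (x i) = M * ‖x i‖ := fun i => by
      have := key i (Finset.mem_univ i); linarith
    constructor
    · intro i
      have := hterm i; have := hterm2 i; have := key' i
      linarith
    · intro i
      have := hterm i; have := hterm2 i; have := key' i
      nlinarith [sub_mul ‖xs i‖ M ‖x i‖]
  · rintro ⟨h1, h2⟩
    rw [Finset.mul_sum]
    apply Finset.sum_congr rfl
    intro i _
    linear_combination (h1 i) + (h2 i)
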